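/- Let T be a locally finite tree and let A be a set of vertices of T. Suppose there exists a finite set S of vertices of T such that deleting S from T leaves at least three connected components each containing infinitely many elements of A (i.e., A has at least three ends in T). Then there exists a single vertex v of T such that deleting v from T leaves at least three connected components each containing infinitely many elements of A. -/

import Mathlib

variable {V : Type*}

/-- The connected component `C` of the graph obtained from `G` by deleting the vertex set `S`
contains infinitely many elements of `A`. -/
def CompInfinite (G : SimpleGraph V) (S A : Set V) (C : (G.induce Sᶜ).ConnectedComponent) :
    Prop :=
  {x : ↥Sᶜ | (G.induce Sᶜ).connectedComponentMk x = C ∧ (x : V) ∈ A}.Infinite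

/-- Deleting the vertex set `S` from `G` leaves at least three connected components, each
containing infinitely many elements of `A`. -/
def ThreeEnds (G : SimpleGraph V) (S A : Set V) : Prop :=
  ∃ C₁ C₂ C₃ : (G.induce Sᶜ).ConnectedComponent,
    C₁ ≠ C₂ ∧ C₁ ≠ C₃ ∧ C₂ ≠ C₃ ∧
      CompInfinite G S A C₁ ∧ CompInfinite G S A C₂ ∧ CompInfinite G S A C₃

namespace TreeAux

open SimpleGraph Walk

variable {G : SimpleGraph V}

/-- Connectivity within a vertex set `W`: a walk whose support stays in `W`. -/
def Conn (G : SimpleGraph V) (W : Set V) (x y : V) : Prop :=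
  ∃ w : G.Walk x y, ∀ v ∈ w.support, v ∈ W

lemma Conn.mem_left {W : Set V} {x y : V} (h : Conn G W x y) : x ∈ W := by
  obtain ⟨w, hw⟩ := h; exact hw _ w.start_mem_support

lemma Conn.mem_right {W : Set V} {x y : V} (h : Conn G W x y) : y ∈ W := by
  obtain ⟨w, hw⟩ := h; exact hw _ w.end_mem_support

lemma Conn.refl {W : Set V} {x : V} (h : x ∈ W) : Conn G W x x :=
  ⟨Walk.nil, by simpa⟩

lemma Conn.symm {W : Set V} {x y : V} (h : Conn G W x y) : Conn G W y x := by
  obtain ⟨w, hw⟩ := h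
  exact ⟨w.reverse, by intro v hv; rw [Walk.support_reverse] at hv; exact hw v (by simpa using hv)⟩

lemma Conn.trans {W : Set V} {x y z : V} (h : Conn G W x y) (h' : Conn G W y z) :
    Conn G W x z := by
  obtain ⟨w, hw⟩ := h; obtain ⟨w', hw'⟩ := h'
  refine ⟨w.append w', ?_⟩
  intro v hv
  rcases (Walk.mem_support_append_iff _ _).1 hv with h | h
  · exact hw v h
  · exact hw' v h

lemma Conn.mono {W W' : Set V} {x y : V} (hW : W ⊆ W') (h : Conn G W x y) : Conn G W' x y := by
  obtain ⟨w, hw⟩ := h; exact ⟨w, fun v hv => hW (hw v hv)⟩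

section Tree

variable (hT : G.IsTree)

/-- The unique path between two vertices of a tree. -/
noncomputable def pth (x y : V) : G.Walk x y := (hT.existsUnique_path x y).exists.choose

lemma pth_isPath (x y : V) : (pth hT x y).IsPath := (hT.existsUnique_path x y).exists.choose_spec

lemma pth_unique {x y : V} (w : G.Walk x y) (hw : w.IsPath) : w = pth hT x y :=
  (hT.existsUnique_path x y).unique hw (pth_isPath hT x y)

/-- The set of vertices on the unique path between `x` and `y`. -/
def sup (x y : V) : Set V := {v | v ∈ (pth hT x y).support}

lemma sup_finite (x y : V) : (sup hT x y).Finite :=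
  (pth hT x y).support.finite_toSet

lemma left_mem_sup (x y : V) : x ∈ sup hT x y := (pth hT x y).start_mem_support

lemma right_mem_sup (x y : V) : y ∈ sup hT x y := (pth hT x y).end_mem_support

lemma sup_self (x : V) : sup hT x x = {x} := by
  have : (Walk.nil : G.Walk x x) = pth hT x x := pth_unique hT _ (by simp [Walk.IsPath.nil])
  ext v; simp [sup, ← this]

lemma sup_symm (x y : V) : sup hT x y = sup hT y x := by
  have : (pth hT x y).reverse = pth hT y x := pth_unique hT _ ((pth_isPath hT x y).reverse)
  ext v; simp [sup, ← this]

lemma sup_adj {x y : V} (h : G.Adj x y) : sup hT x y = {x, y} := by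
  have hp : (Walk.cons h Walk.nil : G.Walk x y).IsPath := by
    simp [Walk.isPath_def, h.ne]
  have := pth_unique hT _ hp
  ext v; simp [sup, ← this]

/-- Triangle inequality for path supports, via `bypass`. -/
lemma sup_triangle (x y z : V) : sup hT x z ⊆ sup hT x y ∪ sup hT y z := by
  classical
  have hb : ((pth hT x y).append (pth hT y z)).bypass = pth hT x z :=
    pth_unique hT _ (Walk.bypass_isPath _)
  intro v hv
  have : v ∈ ((pth hT x y).append (pth hT y z)).support := by
    apply Walk.support_bypass_subset
    rw [hb]; exact hv
  rcases (Walk.mem_support_append_iff _ _).1 this with h | h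
  · exact Or.inl h
  · exact Or.inr h

/-- Master bridge: connectivity within `W` is equivalent to the unique path staying in `W`. -/
lemma conn_iff_sup_subset {W : Set V} {x y : V} : Conn G W x y ↔ sup hT x y ⊆ W := by
  classical
  constructor
  · rintro ⟨w, hw⟩
    have hb : w.bypass = pth hT x y := pth_unique hT _ (Walk.bypass_isPath _)
    intro v hv
    exact hw v (Walk.support_bypass_subset w (by rw [hb]; exact hv))
  · intro h
    exact ⟨pth hT x y, fun v hv => h hv⟩

/-- Decomposition at an interior point. -/
lemma sup_decomp {x y z : V} (h : y ∈ sup hT x z) :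
    sup hT x y ⊆ sup hT x z ∧ sup hT y z ⊆ sup hT x z ∧
      ∀ v, v ∈ sup hT x y → v ∈ sup hT y z → v = y := by
  classical
  have hp := pth_isPath hT x z
  have ht : (pth hT x z).takeUntil y h = pth hT x y := pth_unique hT _ (hp.takeUntil h)
  have hd : (pth hT x z).dropUntil y h = pth hT y z := pth_unique hT _ (hp.dropUntil h)
  have hspec := Walk.take_spec (pth hT x z) h
  refine ⟨?_, ?_, ?_⟩
  · intro v hv
    have : v ∈ ((pth hT x z).takeUntil y h).support := by rw [ht]; exact hv
    exact Walk.support_takeUntil_subset _ h this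
  · intro v hv
    have : v ∈ ((pth hT x z).dropUntil y h).support := by rw [hd]; exact hv
    exact Walk.support_dropUntil_subset _ h this
  · intro v hv1 hv2
    have hnodup : (((pth hT x z).takeUntil y h).append ((pth hT x z).dropUntil y h)).support.Nodup := by
      rw [hspec]; exact hp.support_nodup
    rw [Walk.support_append] at hnodup
    have hdisj := List.disjoint_of_nodup_append hnodup
    by_contra hne
    have hv1' : v ∈ ((pth hT x z).takeUntil y h).support := by rw [ht]; exact hv1
    have hv2'' : v ∈ ((pth hT x z).dropUntil y h).support := by rw [hd]; exact hv2
    rw [Walk.support_eq_cons] at hv2''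
    rcases List.mem_cons.1 hv2'' with hcase | hcase
    · exact hne hcase
    · exact hdisj hv1' hcase

end Tree

section Tree2

variable (hT : G.IsTree)

/-- Gluing two paths that only share the middle point. -/
lemma sup_glue {x y z : V} (h : ∀ v, v ∈ sup hT x y → v ∈ sup hT y z → v = y) :
    sup hT x z = sup hT x y ∪ sup hT y z := by
  classical
  have hpath : ((pth hT x y).append (pth hT y z)).IsPath := by
    rw [Walk.isPath_def, Walk.support_append]
    apply List.Nodup.append (pth_isPath hT x y).support_nodup
      ((pth_isPath hT y z).support_nodup.sublist (List.tail_sublist _))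
    intro v hv1 hv2
    have hv2' : v ∈ (pth hT y z).support := List.mem_of_mem_tail hv2
    have hvy : v = y := h v hv1 hv2'
    rw [hvy] at hv2
    have hnodup := (pth_isPath hT y z).support_nodup
    rw [(pth hT y z).support_eq_cons] at hnodup
    exact (List.nodup_cons.1 hnodup).1 hv2
  have heq : (pth hT x y).append (pth hT y z) = pth hT x z := pth_unique hT _ hpath
  ext v
  constructor
  · intro hv
    have : v ∈ ((pth hT x y).append (pth hT y z)).support := by rw [heq]; exact hv
    exact (Walk.mem_support_append_iff _ _).1 this
  · intro hv
    have : v ∈ ((pth hT x y).append (pth hT y z)).support :=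
      (Walk.mem_support_append_iff _ _).2 hv
    rw [heq] at this; exact this

lemma mem_sup_glue {x y z : V} (h : ∀ v, v ∈ sup hT x y → v ∈ sup hT y z → v = y) :
    y ∈ sup hT x z := by
  rw [sup_glue hT h]; exact Or.inl (right_mem_sup hT x y)

/-- Convexity of path supports. -/
lemma sup_convex {x y p q : V} (hp : p ∈ sup hT x y) (hq : q ∈ sup hT x y) :
    sup hT p q ⊆ sup hT x y := by
  obtain ⟨h1, h2, _⟩ := sup_decomp hT hp
  have hsplit := sup_glue hT (sup_decomp hT hp).2.2
  rw [hsplit] at hq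
  rcases hq with hc | hc
  · intro v hv
    apply h1
    rw [sup_symm hT p q] at hv
    exact (sup_decomp hT hc).2.1 hv
  · exact fun v hv => h2 ((sup_decomp hT hc).1 hv)

/-- For an edge `(u,v)` and any vertex `a`: `u` is on the path `a — v`, or `v` is on `a — u`. -/
lemma adj_sep {u v : V} (huv : G.Adj u v) (a : V) :
    u ∈ sup hT a v ∨ v ∈ sup hT a u := by
  classical
  by_contra hc
  push_neg at hc
  obtain ⟨h1, h2⟩ := hc
  have hpath : ((pth hT a v).append (Walk.cons huv.symm Walk.nil)).IsPath := by
    rw [Walk.isPath_def, Walk.support_append]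
    have : (Walk.cons huv.symm (Walk.nil : G.Walk u u)).support.tail = [u] := by simp
    rw [this]
    apply List.Nodup.append (pth_isPath hT a v).support_nodup (List.nodup_singleton u)
    intro w hw hw'
    rw [List.mem_singleton] at hw'
    subst hw'
    exact h1 hw
  have heq : (pth hT a v).append (Walk.cons huv.symm Walk.nil) = pth hT a u :=
    pth_unique hT _ hpath
  apply h2
  show v ∈ (pth hT a u).support
  rw [← heq]
  exact (Walk.mem_support_append_iff _ _).2 (Or.inl (right_mem_sup hT a v))

lemma conn_of_mem_sup {W : Set V} {x y v : V} (h : Conn G W x y) (hv : v ∈ sup hT x y) :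
    Conn G W x v := by
  rw [conn_iff_sup_subset hT] at h ⊢
  exact fun w hw => h ((sup_decomp hT hv).1 hw)

end Tree2

section Proj

variable (hT : G.IsTree)

/-- First hit of a walk on a set. -/
lemma first_hit {W : Set V} : ∀ {x y : V} (w : G.Walk x y), y ∈ W →
    ∃ p ∈ W, ∃ w1 : G.Walk x p, (∀ v ∈ w1.support, v ∈ W → v = p) ∧
      ∀ v ∈ w1.support, v ∈ w.support := by
  intro x y w
  induction w with
  | nil =>
    intro hy
    exact ⟨_, hy, Walk.nil, by simp, by simp⟩
  | @cons a b c hab w ih =>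
    intro hy
    by_cases ha : a ∈ W
    · exact ⟨a, ha, Walk.nil, by simp, by simp⟩
    · obtain ⟨p, hp, w1, hchar, hsub⟩ := ih hy
      refine ⟨p, hp, Walk.cons hab w1, ?_, ?_⟩
      · intro v hv hvW
        rw [Walk.support_cons, List.mem_cons] at hv
        rcases hv with rfl | hv
        · exact absurd hvW ha
        · exact hchar v hv hvW
      · intro v hv
        rw [Walk.support_cons, List.mem_cons] at hv
        rw [Walk.support_cons, List.mem_cons]
        rcases hv with rfl | hv
        · exact Or.inl rfl
        · exact Or.inr (hsub v hv)

/-- `IsProj R x p`: `p` is the projection of `x` onto the convex set `R`. -/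
def IsProj (R : Set V) (x p : V) : Prop :=
  p ∈ R ∧ ∀ v ∈ sup hT x p, v ∈ R → v = p

lemma isProj_mem_sup {R : Set V} (hconv : ∀ p ∈ R, ∀ r ∈ R, sup hT p r ⊆ R)
    {x p : V} (h : IsProj hT R x p) {r : V} (hr : r ∈ R) : p ∈ sup hT x r := by
  apply mem_sup_glue hT
  intro v hv1 hv2
  exact h.2 v hv1 (hconv p h.1 r hr hv2)

lemma isProj_unique' {R : Set V} (hconv : ∀ p ∈ R, ∀ r ∈ R, sup hT p r ⊆ R)
    {x p p' : V} (h : IsProj hT R x p) (hp' : p' ∈ R) (hmem : p' ∈ sup hT x p) : p' = p :=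
  h.2 p' hmem hp'

lemma proj_exists {R : Set V} (hconv : ∀ p ∈ R, ∀ r ∈ R, sup hT p r ⊆ R)
    {r0 : V} (hr0 : r0 ∈ R) (x : V) : ∃ p, IsProj hT R x p := by
  classical
  obtain ⟨p, hp, w1, hchar, hsub⟩ := first_hit (pth hT x r0) (by exact hr0)
  refine ⟨p, hp, ?_⟩
  have hb : w1.bypass = pth hT x p := pth_unique hT _ (Walk.bypass_isPath _)
  intro v hv hvR
  apply hchar v _ hvR
  apply Walk.support_bypass_subset
  rw [hb]; exact hv

lemma isProj_uniq {R : Set V} (hconv : ∀ p ∈ R, ∀ r ∈ R, sup hT p r ⊆ R)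
    {x p p' : V} (h : IsProj hT R x p) (h' : IsProj hT R x p') : p = p' :=
  isProj_unique' hT hconv h' h.1 (isProj_mem_sup hT hconv h h'.1)

/-- Constancy of projection: if the path from `x` to `y` avoids `R`, projections agree. -/
lemma isProj_const {R : Set V} (hconv : ∀ p ∈ R, ∀ r ∈ R, sup hT p r ⊆ R)
    {x y p : V} (h : IsProj hT R x p) (hdisj : ∀ v ∈ sup hT y x, v ∉ R) :
    IsProj hT R y p := by
  obtain ⟨q, hq⟩ := proj_exists hT hconv h.1 y
  have hqp : q = p := by
    have hq1 : q ∈ sup hT y p := isProj_mem_sup hT hconv hq h.1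
    have : q ∈ sup hT y x ∪ sup hT x p := sup_triangle hT y x p hq1
    rcases this with hc | hc
    · exact absurd hq.1 (hdisj q hc)
    · exact isProj_unique' hT hconv h hq.1 hc
  rw [← hqp]; exact hq

end Proj

section Ray

variable (hT : G.IsTree)

/-- Ray to an `A'`-infinite direction: adjacent consecutive vertices, plus the canonical
`A'`-infinite branch property. -/
structure IsRayTo (G : SimpleGraph V) (A' : Set V) (r : ℕ → V) : Prop where
  adj : ∀ n, G.Adj (r n) (r (n + 1))
  inj : Function.Injective r
  can : ∀ z : V, ∃ N, (∀ m, N ≤ m → Conn G {z}ᶜ (r N) (r m)) ∧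
    {a ∈ A' | Conn G {z}ᶜ (r N) a}.Infinite

variable {A' : Set V} {r : ℕ → V}

lemma ray_sup_segment (hadj : ∀ n, G.Adj (r n) (r (n + 1))) (hinj : Function.Injective r)
    (a k : ℕ) : sup hT (r a) (r (a + k)) = {v | ∃ i, a ≤ i ∧ i ≤ a + k ∧ r i = v} := by
  induction k with
  | zero =>
    simp only [Nat.add_zero]
    rw [sup_self]
    ext v
    constructor
    · rintro rfl; exact ⟨a, le_refl a, by omega, rfl⟩
    · rintro ⟨i, h1, h2, rfl⟩
      have : i = a := by omega
      subst this; rfl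
  | succ k ih =>
    have hadj' : G.Adj (r (a + k)) (r (a + k + 1)) := hadj (a + k)
    have hset : sup hT (r (a + k)) (r (a + (k + 1))) = {r (a + k), r (a + k + 1)} := by
      have : a + (k + 1) = (a + k) + 1 := by omega
      rw [this]
      exact sup_adj hT hadj'
    have hinter : ∀ v, v ∈ sup hT (r a) (r (a + k)) →
        v ∈ sup hT (r (a + k)) (r (a + (k + 1))) → v = r (a + k) := by
      intro v hv1 hv2
      rw [hset] at hv2
      rcases hv2 with rfl | hv2
      · rfl
      · rw [ih] at hv1
        simp only [Set.mem_singleton_iff] at hv2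
        subst hv2
        obtain ⟨i, h1, h2, hri⟩ := hv1
        have := hinj hri
        omega
    have := sup_glue hT hinter
    rw [this, hset, ih]
    ext v
    constructor
    · rintro (⟨i, h1, h2, rfl⟩ | (rfl | rfl))
      · exact ⟨i, h1, by omega, rfl⟩
      · exact ⟨a + k, by omega, by omega, rfl⟩
      · exact ⟨a + k + 1, by omega, by omega, rfl⟩
    · rintro ⟨i, h1, h2, rfl⟩
      by_cases hik : i ≤ a + k
      · exact Or.inl ⟨i, h1, hik, rfl⟩
      · have : i = a + k + 1 := by omega
        subst this
        exact Or.inr (Or.inr rfl)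

lemma ray_sup_subset_range (hadj : ∀ n, G.Adj (r n) (r (n + 1))) (hinj : Function.Injective r)
    (m n : ℕ) : sup hT (r m) (r n) ⊆ Set.range r := by
  rcases le_total m n with h | h
  · obtain ⟨k, rfl⟩ := Nat.exists_eq_add_of_le h
    rw [ray_sup_segment hT hadj hinj]
    rintro v ⟨i, _, _, rfl⟩; exact ⟨i, rfl⟩
  · obtain ⟨k, rfl⟩ := Nat.exists_eq_add_of_le h
    rw [sup_symm, ray_sup_segment hT hadj hinj]
    rintro v ⟨i, _, _, rfl⟩; exact ⟨i, rfl⟩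

lemma ray_range_convex (hadj : ∀ n, G.Adj (r n) (r (n + 1))) (hinj : Function.Injective r) :
    ∀ p ∈ Set.range r, ∀ q ∈ Set.range r, sup hT p q ⊆ Set.range r := by
  rintro p ⟨m, rfl⟩ q ⟨n, rfl⟩
  exact ray_sup_subset_range hT hadj hinj m n

include hT in
/-- All vertices of a ray are `Conn`-equivalent avoiding any `z` off the ray. -/
lemma ray_conn_off (hadj : ∀ n, G.Adj (r n) (r (n + 1))) (hinj : Function.Injective r)
    {z : V} (hz : z ∉ Set.range r) (m n : ℕ) : Conn G {z}ᶜ (r m) (r n) := by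
  rw [conn_iff_sup_subset hT]
  intro v hv
  intro hvz
  rw [Set.mem_singleton_iff] at hvz
  subst hvz
  exact hz (ray_sup_subset_range hT hadj hinj m n hv)

/-- The class of `x` at `z` containing the tail of the ray is `A'`-infinite. -/
lemma tail_class_infinite (hray : IsRayTo G A' r) {z x : V}
    (hx : ∃ M, ∀ m, M ≤ m → Conn G {z}ᶜ x (r m)) :
    {a ∈ A' | Conn G {z}ᶜ x a}.Infinite := by
  obtain ⟨N, hN, hinf⟩ := hray.can z
  obtain ⟨M, hM⟩ := hx
  have hxr : Conn G {z}ᶜ x (r N) := by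
    have h1 : Conn G {z}ᶜ x (r (max M N)) := hM _ (le_max_left _ _)
    have h2 : Conn G {z}ᶜ (r N) (r (max M N)) := hN _ (le_max_right _ _)
    exact h1.trans h2.symm
  apply hinf.mono
  intro a ⟨ha, hconn⟩
  exact ⟨ha, hxr.trans hconn⟩

end Ray

section Build

variable (hT : G.IsTree)

/-- From `x` to `u`, there is a neighbor `w` of `u` connected to `x` avoiding `u`,
within the path from `x` to `u`. -/
lemma exists_nbr_conn {x u : V} (hne : x ≠ u) :
    ∃ w, G.Adj u w ∧ w ∈ sup hT x u ∧ Conn G (sup hT x u \ {u}) x w := by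
  obtain ⟨b, hadj, q, hq⟩ := Walk.exists_eq_cons_of_ne (Ne.symm hne) (pth hT u x)
  have hsupp : (pth hT u x).support = u :: q.support := by rw [hq, Walk.support_cons]
  have hnodup := (pth_isPath hT u x).support_nodup
  rw [hsupp] at hnodup
  have huq : u ∉ q.support := (List.nodup_cons.1 hnodup).1
  have hqsub : ∀ v ∈ q.support, v ∈ sup hT x u := by
    intro v hv
    rw [sup_symm]
    show v ∈ (pth hT u x).support
    rw [hsupp]
    exact List.mem_cons_of_mem _ hv
  refine ⟨b, hadj, hqsub b q.start_mem_support, ⟨q.reverse, ?_⟩⟩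
  intro v hv
  rw [Walk.support_reverse, List.mem_reverse] at hv
  exact ⟨hqsub v hv, fun hvu => huq (by rw [Set.mem_singleton_iff] at hvu; subst hvu; exact hv)⟩

/-- Pigeonhole: an infinite set covered by classes indexed by a finite set. -/
lemma infinite_pigeonhole {α : Type*} {s : Set V} (hs : s.Infinite) {ι : Set α}
    (hι : ι.Finite) {P : α → V → Prop} (hcover : ∀ a ∈ s, ∃ w ∈ ι, P w a) :
    ∃ w ∈ ι, {a ∈ s | P w a}.Infinite := by
  by_contra hc
  push_neg at hc
  have : s ⊆ ⋃ w ∈ ι, {a ∈ s | P w a} := by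
    intro a ha
    obtain ⟨w, hw, hP⟩ := hcover a ha
    exact Set.mem_biUnion hw ⟨ha, hP⟩
  exact hs (Set.Finite.subset (Set.Finite.biUnion hι fun w hw => hc w hw) this)

variable (hlf : G.LocallyFinite) (A C : Set V)

/-- Invariant for the ray construction inside a set `C`. -/
def Good (G : SimpleGraph V) (A C : Set V) (v : V) (D : Set V) : Prop :=
  v ∈ C ∧ D ⊆ C ∧ v ∉ D ∧
    (∃ u, G.Adj v u ∧ u ∈ D ∧ ∀ y, y ∈ D ↔ Conn G (C \ {v}) y u) ∧ (A ∩ D).Infinite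

variable {A C}
variable (hCconn : ∀ x ∈ C, ∀ y ∈ C, Conn G C x y)

include hT hCconn in
lemma sup_subset_of_mem_C {x y : V} (hx : x ∈ C) (hy : y ∈ C) : sup hT x y ⊆ C :=
  (conn_iff_sup_subset hT).1 (hCconn x hx y hy)

include hT hCconn in
/-- The class `D` in the invariant is closed under path supports and avoids `v`. -/
lemma good_sup_subset {v : V} {D : Set V} (hG : Good G A C v D) {x y : V}
    (hx : x ∈ D) (hy : y ∈ D) : sup hT x y ⊆ D \ {v} := by
  obtain ⟨hv, hDC, hvD, ⟨u, hadj, huD, hDdef⟩, hinf⟩ := hG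
  have hclass : ∀ z ∈ D, sup hT z u ⊆ D \ {v} := by
    intro z hz w hw
    have hconn : Conn G (C \ {v}) z u := (hDdef z).1 hz
    have hsub := (conn_iff_sup_subset hT).1 hconn
    have hw' : Conn G (C \ {v}) w u := by
      have : Conn G (C \ {v}) z w := conn_of_mem_sup hT hconn hw
      exact this.symm.trans hconn
    exact ⟨(hDdef w).2 hw', ((hsub hw).2 : w ∉ ({v} : Set V))⟩
  intro w hw
  rcases sup_triangle hT x u y hw with hc | hc
  · exact hclass x hx hc
  · rw [sup_symm] at hc
    exact hclass y hy hc

include hT hlf hCconn in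
/-- The main step: from a good pair, construct the next one. -/
lemma good_step {v : V} {D : Set V} (hG : Good G A C v D) :
    ∃ u D', Good G A C u D' ∧ G.Adj v u ∧ u ∈ D ∧ D' ⊆ D := by
  classical
  obtain ⟨hv, hDC, hvD, ⟨u, hadj, huD, hDdef⟩, hinf⟩ := hG
  -- Key separation: u is on the path from any a ∈ D to v.
  have F1 : ∀ a ∈ D, u ∈ sup hT a v := by
    intro a ha
    have hv_not : v ∉ sup hT a u := by
      intro hmem
      exact (good_sup_subset hT hCconn ⟨hv, hDC, hvD, ⟨u, hadj, huD, hDdef⟩, hinf⟩ ha huD hmem).2 rfl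
    rcases adj_sep hT hadj a with hc | hc
    · exact absurd hc hv_not
    · exact hc
  have F2 : (A ∩ (D \ {u})).Infinite := by
    have : A ∩ (D \ {u}) = (A ∩ D) \ {u} := by ext t; simp [Set.mem_diff]; tauto
    rw [this]
    exact hinf.diff (Set.finite_singleton u)
  -- Each a ∈ D \ {u} is connected, avoiding u, to some neighbor of u.
  have F3 : ∀ a ∈ A ∩ (D \ {u}), ∃ w ∈ G.neighborSet u, Conn G ((D \ {u}) \ {v}) a w := by
    rintro a ⟨haA, haD, hau⟩
    obtain ⟨w, hw, hwsup, hconn⟩ := exists_nbr_conn hT (hau : a ≠ u)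
    refine ⟨w, hw, hconn.mono ?_⟩
    intro t ⟨ht1, ht2⟩
    have := good_sup_subset hT hCconn ⟨hv, hDC, hvD, ⟨u, hadj, huD, hDdef⟩, hinf⟩ haD huD ht1
    exact ⟨⟨this.1, ht2⟩, this.2⟩
  obtain ⟨w, hwnbr, hXinf⟩ := infinite_pigeonhole F2
    (Set.toFinite (G.neighborSet u)) F3
  have hadj_uw : G.Adj u w := hwnbr
  set D' := {y | Conn G (C \ {u}) y w} with hD'
  -- basic facts about the chosen w
  obtain ⟨a0, ⟨ha0A, ha0D, ha0u⟩, ha0conn⟩ := hXinf.nonempty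
  have hwD : Conn G ((D \ {u}) \ {v}) a0 w := ha0conn
  have hwmem : w ∈ (D \ {u}) \ {v} := hwD.mem_right
  have hwC : w ∈ C := hDC hwmem.1.1
  have hwu : w ≠ u := hwmem.1.2
  have hwv : w ≠ v := hwmem.2
  -- v ∉ D'
  have hvD' : v ∉ D' := by
    intro hvconn
    -- then a0 connects to v avoiding u; but u ∈ sup a0 v
    have h1 : Conn G (C \ {u}) a0 w := hwD.mono (fun t ht => ⟨hDC ht.1.1, ht.1.2⟩)
    have h2 : Conn G (C \ {u}) a0 v := h1.trans (Conn.symm hvconn)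
    have := (conn_iff_sup_subset hT).1 h2 (F1 a0 ha0D)
    exact this.2 rfl
  -- D' ⊆ D
  have hD'D : D' ⊆ D := by
    intro y hy
    have hysup : sup hT y w ⊆ D' := by
      intro t ht
      have : Conn G (C \ {u}) y t := conn_of_mem_sup hT (hy : Conn G (C \ {u}) y w) ht
      exact (this.symm.trans hy : Conn G (C \ {u}) t w)
    have hvsup : v ∉ sup hT y w := fun hmem => hvD' (hysup hmem)
    apply (hDdef y).2
    rw [conn_iff_sup_subset hT]
    intro t ht
    rcases sup_triangle hT y w u ht with hc | hc
    · have htD' := hysup hc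
      have htC : t ∈ C := (htD' : Conn G (C \ {u}) t w).mem_left.1
      refine ⟨htC, ?_⟩
      intro htv
      rw [Set.mem_singleton_iff] at htv
      subst htv
      exact hvD' htD'
    · rw [sup_adj hT hadj_uw.symm] at hc
      rcases hc with rfl | hc
      · exact ⟨hwC, fun h => hwv (by rwa [Set.mem_singleton_iff] at h)⟩
      · rw [Set.mem_singleton_iff] at hc
        subst hc
        exact ⟨hDC huD, fun h => hadj.ne (Set.mem_singleton_iff.1 h).symm⟩
  refine ⟨u, D', ⟨hDC huD, ?_, ?_, ⟨w, hadj_uw, ?_, fun y => Iff.rfl⟩, ?_⟩, hadj, huD, hD'D⟩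
  · intro y hy
    exact (hy : Conn G (C \ {u}) y w).mem_left.1
  · intro hu
    exact (hu : Conn G (C \ {u}) u w).mem_left.2 rfl
  · show Conn G (C \ {u}) w w
    exact Conn.refl ⟨hwC, fun h => hwu (by rwa [Set.mem_singleton_iff] at h)⟩
  · apply Set.Infinite.mono _ hXinf
    rintro a ⟨⟨haA, haD⟩, haconn⟩
    have : Conn G (C \ {u}) a w := Conn.mono (fun t ht => ⟨hDC ht.1.1, ht.1.2⟩) haconn
    exact ⟨haA, this⟩



include hT hlf hCconn in
lemma good_init (hAC : (A ∩ C).Infinite) : ∃ v D, Good G A C v D := by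
  classical
  obtain ⟨a1, ha1A, ha1C⟩ := hAC.nonempty
  set v := a1 with hv
  have hvC : v ∈ C := ha1C
  have F2 : (A ∩ (C \ {v})).Infinite := by
    have : A ∩ (C \ {v}) = (A ∩ C) \ {v} := by ext t; simp [Set.mem_diff]; tauto
    rw [this]
    exact hAC.diff (Set.finite_singleton v)
  have F3 : ∀ a ∈ A ∩ (C \ {v}), ∃ w ∈ G.neighborSet v, Conn G (C \ {v}) a w := by
    rintro a ⟨haA, haC, hav⟩
    obtain ⟨w, hw, hwsup, hconn⟩ := exists_nbr_conn hT (hav : a ≠ v)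
    refine ⟨w, hw, hconn.mono ?_⟩
    intro t ⟨ht1, ht2⟩
    exact ⟨sup_subset_of_mem_C hT hCconn haC hvC ht1, ht2⟩
  obtain ⟨w, hwnbr, hXinf⟩ := infinite_pigeonhole F2 (Set.toFinite (G.neighborSet v)) F3
  have hadj_vw : G.Adj v w := hwnbr
  obtain ⟨a0, ⟨ha0A, ha0C⟩, ha0conn⟩ := hXinf.nonempty
  have hwmem : w ∈ C \ {v} := ha0conn.mem_right
  refine ⟨v, {y | Conn G (C \ {v}) y w}, hvC, ?_, ?_, ⟨w, hadj_vw, ?_, fun y => Iff.rfl⟩, ?_⟩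
  · intro y hy
    exact (hy : Conn G (C \ {v}) y w).mem_left.1
  · intro hvmem
    exact (hvmem : Conn G (C \ {v}) v w).mem_left.2 rfl
  · exact Conn.refl hwmem
  · apply Set.Infinite.mono _ hXinf
    rintro a ⟨⟨haA, haC⟩, haconn⟩
    exact ⟨haA, haconn⟩

include hT hlf hCconn in
lemma exists_ray (hAC : (A ∩ C).Infinite) :
    ∃ r : ℕ → V, IsRayTo G A r ∧ ∀ n, r n ∈ C := by
  classical
  obtain ⟨v0, D0, hGood0⟩ := good_init hT hlf hCconn hAC
  choose u' Dn' hGood' hadj' hmem' hsub' using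
    fun (s : {p : V × Set V // Good G A C p.1 p.2}) => good_step hT hlf hCconn s.2
  let f : {p : V × Set V // Good G A C p.1 p.2} → {p : V × Set V // Good G A C p.1 p.2} :=
    fun s => ⟨(u' s, Dn' s), hGood' s⟩
  let seq : ℕ → {p : V × Set V // Good G A C p.1 p.2} := fun n => f^[n] ⟨(v0, D0), hGood0⟩
  set r : ℕ → V := fun n => (seq n).1.1 with hr
  set D : ℕ → Set V := fun n => (seq n).1.2 with hD
  have hseq_succ : ∀ n, seq (n + 1) = f (seq n) := by
    intro n
    show f^[n + 1] _ = f (f^[n] _)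
    rw [Function.iterate_succ_apply']
  have hGood : ∀ n, Good G A C (r n) (D n) := fun n => (seq n).2
  have hr_succ : ∀ n, r (n + 1) = u' (seq n) := fun n =>
    congrArg (fun s : {p : V × Set V // Good G A C p.1 p.2} => s.1.1) (hseq_succ n)
  have hD_succ : ∀ n, D (n + 1) = Dn' (seq n) := fun n =>
    congrArg (fun s : {p : V × Set V // Good G A C p.1 p.2} => s.1.2) (hseq_succ n)
  have hadj : ∀ n, G.Adj (r n) (r (n + 1)) := by
    intro n
    rw [hr_succ n]
    exact hadj' (seq n)
  have hmem : ∀ n, r (n + 1) ∈ D n := by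
    intro n
    rw [hr_succ n]
    exact hmem' (seq n)
  have hsub : ∀ n, D (n + 1) ⊆ D n := by
    intro n
    rw [hD_succ n]
    exact hsub' (seq n)
  have hDmono : ∀ n k, D (n + k) ⊆ D n := by
    intro n k
    induction k with
    | zero => exact fun t ht => ht
    | succ k ih => exact fun t ht => ih (hsub (n + k) ht)
  have hmem_lt : ∀ n m, n < m → r m ∈ D n := by
    intro n m hnm
    obtain ⟨k, rfl⟩ := Nat.exists_eq_add_of_lt hnm
    have : r (n + k + 1) ∈ D (n + k) := hmem (n + k)
    exact hDmono n k this
  have hnotmem : ∀ n, r n ∉ D n := fun n => (hGood n).2.2.1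
  have hinj : Function.Injective r := by
    intro a b hab
    by_contra hne
    rcases Nat.lt_or_ge a b with h | h
    · exact hnotmem a (hab ▸ hmem_lt a b h)
    · have h' : b < a := by omega
      exact hnotmem b (hab ▸ hmem_lt b a h')
  have hrC : ∀ n, r n ∈ C := fun n => (hGood n).1
  refine ⟨r, ⟨hadj, hinj, ?_⟩, hrC⟩
  intro z
  -- find N with z ∉ D N
  have hzD : ∃ N, z ∉ D N := by
    by_contra hc
    push_neg at hc
    have hzC : z ∈ C := (hGood 0).2.1 (hc 0)
    have hr0C : r 0 ∈ C := hrC 0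
    have hkey : ∀ n, r n ∈ sup hT z (r 0) := by
      intro n
      obtain ⟨_, hDC, hvD, ⟨un, hadjn, hunD, hDdef⟩, _⟩ := hGood n
      have hnr0 : r 0 ∉ D n := by
        intro h0
        rcases Nat.eq_zero_or_pos n with rfl | hn
        · exact hnotmem 0 h0
        · exact hnotmem 0 (hDmono 0 n (by simpa using h0))
      have hnconn : ¬ Conn G (C \ {r n}) z (r 0) := by
        intro hconn
        apply hnr0
        apply (hDdef (r 0)).2
        exact hconn.symm.trans ((hDdef z).1 (hc n))
      rw [conn_iff_sup_subset hT, Set.not_subset] at hnconn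
      obtain ⟨t, ht, htn⟩ := hnconn
      have htC : t ∈ C := sup_subset_of_mem_C hT hCconn hzC hr0C ht
      have : t = r n := by
        by_contra hne
        exact htn ⟨htC, fun hmem => hne (Set.mem_singleton_iff.1 hmem)⟩
      rw [← this]
      exact ht
    exact (sup_finite hT z (r 0)).not_infinite
      (Set.infinite_of_injective_forall_mem hinj hkey)
  obtain ⟨N, hzN⟩ := hzD
  have hconnD : ∀ x ∈ D N, ∀ y ∈ D N, Conn G {z}ᶜ x y := by
    intro x hx y hy
    rw [conn_iff_sup_subset hT]
    intro t ht
    have := good_sup_subset hT hCconn (hGood N) hx hy ht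
    intro htz
    rw [Set.mem_singleton_iff] at htz
    subst htz
    exact hzN this.1
  refine ⟨N + 1, ?_, ?_⟩
  · intro m hm
    exact hconnD _ (hmem N) _ (hmem_lt N m (by omega))
  · apply Set.Infinite.mono _ (hGood N).2.2.2.2
    rintro a ⟨haA, haD⟩
    exact ⟨haA, hconnD _ (hmem N) _ haD⟩

end Build


section Bridge

/-- Walks in an induced subgraph give `Conn`. -/
lemma reachable_induce_iff {W : Set V} (x y : ↥W) :
    (G.induce W).Reachable x y ↔ Conn G W ↑x ↑y := by
  constructor
  · rintro ⟨p⟩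
    induction p with
    | nil => exact Conn.refl (Subtype.coe_prop _)
    | @cons a b c hab p ih =>
      have hadj : G.Adj ↑a ↑b := hab
      have h1 : Conn G W ↑a ↑b :=
        ⟨Walk.cons hadj Walk.nil, by
          intro v hv
          rw [Walk.support_cons] at hv
          rcases List.mem_cons.1 hv with rfl | hv
          · exact a.2
          · simp only [Walk.support_nil, List.mem_singleton] at hv
            subst hv
            exact b.2⟩
      exact h1.trans ih
  · rintro ⟨w, hw⟩
    have : ∀ {a b : V} (w : G.Walk a b), (∀ v ∈ w.support, v ∈ W) →
        ∀ (ha : a ∈ W) (hb : b ∈ W), (G.induce W).Reachable ⟨a, ha⟩ ⟨b, hb⟩ := by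
      intro a b w
      induction w with
      | nil => intro _ ha hb; exact Reachable.refl _
      | @cons a' b' c' hab p ih =>
        intro hsup ha hb
        have hb' : b' ∈ W := hsup b' (by rw [Walk.support_cons]; exact List.mem_cons_of_mem _ p.start_mem_support)
        have hadj : (G.induce W).Adj ⟨a', ha⟩ ⟨b', hb'⟩ := by
          simp only [comap_adj, Function.Embedding.coe_subtype]
          exact hab
        exact hadj.reachable.trans (ih (fun v hv => hsup v (by rw [Walk.support_cons]; exact List.mem_cons_of_mem _ hv)) hb' hb)
    exact this w hw x.2 y.2

/-- Packaging a separating vertex and three classes into `ThreeEnds`. -/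
lemma final_package {A : Set V} (z x1 x2 x3 : V)
    (h12 : ¬ Conn G {z}ᶜ x1 x2) (h13 : ¬ Conn G {z}ᶜ x1 x3) (h23 : ¬ Conn G {z}ᶜ x2 x3)
    (i1 : {a ∈ A | Conn G {z}ᶜ x1 a}.Infinite)
    (i2 : {a ∈ A | Conn G {z}ᶜ x2 a}.Infinite)
    (i3 : {a ∈ A | Conn G {z}ᶜ x3 a}.Infinite) :
    ThreeEnds G {z} A := by
  classical
  have hx1 : x1 ∈ ({z} : Set V)ᶜ := by
    obtain ⟨a, ⟨_, hconn⟩⟩ := i1.nonempty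
    exact hconn.mem_left
  have hx2 : x2 ∈ ({z} : Set V)ᶜ := by
    obtain ⟨a, ⟨_, hconn⟩⟩ := i2.nonempty
    exact hconn.mem_left
  have hx3 : x3 ∈ ({z} : Set V)ᶜ := by
    obtain ⟨a, ⟨_, hconn⟩⟩ := i3.nonempty
    exact hconn.mem_left
  have key : ∀ (x : V) (hx : x ∈ ({z} : Set V)ᶜ), {a ∈ A | Conn G {z}ᶜ x a}.Infinite →
      CompInfinite G {z} A ((G.induce ({z} : Set V)ᶜ).connectedComponentMk ⟨x, hx⟩) := by
    intro x hx hinf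
    apply Set.Infinite.of_image (f := (Subtype.val : ↥({z} : Set V)ᶜ → V))
    apply hinf.mono
    rintro a ⟨haA, hconn⟩
    refine ⟨⟨a, hconn.mem_right⟩, ⟨?_, haA⟩, rfl⟩
    exact SimpleGraph.ConnectedComponent.eq.2 ((reachable_induce_iff _ _).2 hconn.symm)
  refine ⟨(G.induce ({z} : Set V)ᶜ).connectedComponentMk ⟨x1, hx1⟩,
         (G.induce ({z} : Set V)ᶜ).connectedComponentMk ⟨x2, hx2⟩,
         (G.induce ({z} : Set V)ᶜ).connectedComponentMk ⟨x3, hx3⟩, ?_, ?_, ?_,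
         key x1 hx1 i1, key x2 hx2 i2, key x3 hx3 i3⟩
  · intro h
    exact h12 ((reachable_induce_iff _ _).1 (SimpleGraph.ConnectedComponent.eq.1 h))
  · intro h
    exact h13 ((reachable_induce_iff _ _).1 (SimpleGraph.ConnectedComponent.eq.1 h))
  · intro h
    exact h23 ((reachable_induce_iff _ _).1 (SimpleGraph.ConnectedComponent.eq.1 h))

end Bridge


section Endgame

variable (hT : G.IsTree) {A : Set V} {r r1 r2 r3 : ℕ → V}

include hT in
lemma not_conn_of_mem {z x y : V} (h : z ∈ sup hT x y) : ¬ Conn G {z}ᶜ x y := by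
  intro hc
  exact ((conn_iff_sup_subset hT).1 hc h) rfl

include hT in
lemma ray_mem_sup (hadj : ∀ n, G.Adj (r n) (r (n + 1))) (hinj : Function.Injective r)
    {i j k : ℕ} (hij : i ≤ j) (hjk : j ≤ k) : r j ∈ sup hT (r i) (r k) := by
  obtain ⟨d, rfl⟩ := Nat.exists_eq_add_of_le (hij.trans hjk)
  rw [ray_sup_segment hT hadj hinj]
  exact ⟨j, hij, hjk, rfl⟩

include hT in
lemma ray_conn_avoid (hadj : ∀ n, G.Adj (r n) (r (n + 1))) (hinj : Function.Injective r)
    {i j k : ℕ} (hij : i < j) (hjk : j ≤ k) : Conn G {r i}ᶜ (r j) (r k) := by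
  rw [conn_iff_sup_subset hT]
  intro t ht
  obtain ⟨d, hd⟩ := Nat.exists_eq_add_of_le hjk
  rw [hd, ray_sup_segment hT hadj hinj] at ht
  obtain ⟨l, hl1, hl2, rfl⟩ := ht
  intro hmem
  rw [Set.mem_singleton_iff] at hmem
  have := hinj hmem
  omega

/-- Case 1: the projections of the two other rays onto `r1` are distinct. -/
lemma win_far (h1 : IsRayTo G A r1) (h2 : IsRayTo G A r2) (h3 : IsRayTo G A r3)
    (hd12 : ∀ m n, r1 m ≠ r2 n) (hd13 : ∀ m n, r1 m ≠ r3 n)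
    {a b : ℕ} (hp : IsProj hT (Set.range r1) (r2 0) (r1 a))
    (hq : IsProj hT (Set.range r1) (r3 0) (r1 b)) (hab : a < b) :
    ThreeEnds G {r1 b} A := by
  have hconv1 := ray_range_convex hT h1.adj h1.inj
  set z := r1 b with hz
  -- h (x1 := r1 (b+1)) vs x2 := r2 0
  have hmem_a : r1 a ∈ sup hT (r2 0) (r1 (b + 1)) :=
    isProj_mem_sup hT hconv1 hp ⟨b + 1, rfl⟩
  have h12 : z ∈ sup hT (r2 0) (r1 (b + 1)) := by
    apply (sup_decomp hT hmem_a).2.1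
    exact ray_mem_sup hT h1.adj h1.inj (le_of_lt hab) (by omega)
  have h13 : z ∈ sup hT (r3 0) (r1 (b + 1)) :=
    isProj_mem_sup hT hconv1 hq ⟨b + 1, rfl⟩
  -- median argument for x2 vs x3
  have h23 : z ∈ sup hT (r2 0) (r3 0) := by
    have hWconv : ∀ p ∈ sup hT (r2 0) z, ∀ q ∈ sup hT (r2 0) z, sup hT p q ⊆ sup hT (r2 0) z :=
      fun p hp' q hq' => sup_convex hT hp' hq'
    obtain ⟨m, hm⟩ := proj_exists hT hWconv (right_mem_sup hT (r2 0) z) (r3 0)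
    have hm_sup3 : m ∈ sup hT (r3 0) z := isProj_mem_sup hT hWconv hm (right_mem_sup hT _ _)
    have hmz : m = z := by
      by_contra hne
      have hmR1 : m ∉ Set.range r1 := by
        intro hmem
        exact hne (hq.2 m hm_sup3 hmem)
      -- r1 a is on sup(r2 0, z)
      have hmem_a' : r1 a ∈ sup hT (r2 0) z := isProj_mem_sup hT hconv1 hp ⟨b, rfl⟩
      have hsplit := sup_glue hT (sup_decomp hT hmem_a').2.2
      have hmW : m ∈ sup hT (r2 0) z := hm.1
      rw [hsplit] at hmW
      rcases hmW with hc | hc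
      · -- m on sup(r2 0, r1 a); then proj of m onto R1 is r1 a
        have hproj_m : IsProj hT (Set.range r1) m (r1 a) := by
          refine ⟨⟨a, rfl⟩, ?_⟩
          intro v hv hvR
          apply hp.2 v _ hvR
          exact sup_convex hT hc (right_mem_sup hT (r2 0) (r1 a)) hv
        have : r1 a ∈ sup hT m z := isProj_mem_sup hT hconv1 hproj_m ⟨b, rfl⟩
        have hsub : sup hT m z ⊆ sup hT (r3 0) z :=
          sup_convex hT hm_sup3 (right_mem_sup hT (r3 0) z)
        have := hq.2 (r1 a) (hsub this) ⟨a, rfl⟩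
        exact absurd (h1.inj this) (by omega)
      · exact hmR1 (ray_sup_subset_range hT h1.adj h1.inj a b hc)
    have : m ∈ sup hT (r3 0) (r2 0) :=
      isProj_mem_sup hT hWconv hm (left_mem_sup hT (r2 0) z)
    rw [← hmz, sup_symm]
    exact this
  -- infiniteness of the three classes
  have i1 : {a' ∈ A | Conn G {z}ᶜ (r1 (b + 1)) a'}.Infinite := by
    apply tail_class_infinite h1
    exact ⟨b + 1, fun m hm => ray_conn_avoid hT h1.adj h1.inj (by omega) hm⟩
  have i2 : {a' ∈ A | Conn G {z}ᶜ (r2 0) a'}.Infinite := by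
    apply tail_class_infinite h2
    refine ⟨0, fun m _ => ray_conn_off hT h2.adj h2.inj ?_ 0 m⟩
    rintro ⟨n, hn⟩
    exact hd12 b n hn.symm
  have i3 : {a' ∈ A | Conn G {z}ᶜ (r3 0) a'}.Infinite := by
    apply tail_class_infinite h3
    refine ⟨0, fun m _ => ray_conn_off hT h3.adj h3.inj ?_ 0 m⟩
    rintro ⟨n, hn⟩
    exact hd13 b n hn.symm
  exact final_package z (r1 (b + 1)) (r2 0) (r3 0)
    (by rw [sup_symm] at h12; exact not_conn_of_mem hT h12)
    (by rw [sup_symm] at h13; exact not_conn_of_mem hT h13)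
    (not_conn_of_mem hT h23) i1 i2 i3

/-- Case 2: equal projections but the two other rays are separated at the projection point. -/
lemma win_med (h1 : IsRayTo G A r1) (h2 : IsRayTo G A r2) (h3 : IsRayTo G A r3)
    (hd12 : ∀ m n, r1 m ≠ r2 n) (hd13 : ∀ m n, r1 m ≠ r3 n)
    {c : ℕ} (hp : IsProj hT (Set.range r1) (r2 0) (r1 c))
    (hq : IsProj hT (Set.range r1) (r3 0) (r1 c))
    (hdiff : ¬ Conn G {r1 c}ᶜ (r2 0) (r3 0)) :
    ThreeEnds G {r1 c} A := by
  have hconv1 := ray_range_convex hT h1.adj h1.inj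
  set z := r1 c with hz
  have h12 : z ∈ sup hT (r2 0) (r1 (c + 1)) := isProj_mem_sup hT hconv1 hp ⟨c + 1, rfl⟩
  have h13 : z ∈ sup hT (r3 0) (r1 (c + 1)) := isProj_mem_sup hT hconv1 hq ⟨c + 1, rfl⟩
  have i1 : {a' ∈ A | Conn G {z}ᶜ (r1 (c + 1)) a'}.Infinite := by
    apply tail_class_infinite h1
    exact ⟨c + 1, fun m hm => ray_conn_avoid hT h1.adj h1.inj (by omega) hm⟩
  have i2 : {a' ∈ A | Conn G {z}ᶜ (r2 0) a'}.Infinite := by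
    apply tail_class_infinite h2
    refine ⟨0, fun m _ => ray_conn_off hT h2.adj h2.inj ?_ 0 m⟩
    rintro ⟨n, hn⟩
    exact hd12 c n hn.symm
  have i3 : {a' ∈ A | Conn G {z}ᶜ (r3 0) a'}.Infinite := by
    apply tail_class_infinite h3
    refine ⟨0, fun m _ => ray_conn_off hT h3.adj h3.inj ?_ 0 m⟩
    rintro ⟨n, hn⟩
    exact hd13 c n hn.symm
  exact final_package z (r1 (c + 1)) (r2 0) (r3 0)
    (by rw [sup_symm] at h12; exact not_conn_of_mem hT h12)
    (by rw [sup_symm] at h13; exact not_conn_of_mem hT h13)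
    hdiff i1 i2 i3

/-- Case 3: all three pairs have coinciding projections and coinciding classes;
the median of the three projection points works. -/
lemma win_center (h1 : IsRayTo G A r1) (h2 : IsRayTo G A r2) (h3 : IsRayTo G A r3)
    (hd12 : ∀ m n, r1 m ≠ r2 n) (hd13 : ∀ m n, r1 m ≠ r3 n) (hd23 : ∀ m n, r2 m ≠ r3 n)
    {c1 c2 c3 : ℕ}
    (hp12 : IsProj hT (Set.range r1) (r2 0) (r1 c1))
    (hp13 : IsProj hT (Set.range r1) (r3 0) (r1 c1))
    (hp21 : IsProj hT (Set.range r2) (r1 0) (r2 c2))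
    (hp23 : IsProj hT (Set.range r2) (r3 0) (r2 c2))
    (hp31 : IsProj hT (Set.range r3) (r1 0) (r3 c3))
    (hp32 : IsProj hT (Set.range r3) (r2 0) (r3 c3))
    (hsame1 : Conn G {r1 c1}ᶜ (r2 0) (r3 0))
    (hsame2 : Conn G {r2 c2}ᶜ (r1 0) (r3 0))
    (hsame3 : Conn G {r3 c3}ᶜ (r1 0) (r2 0)) :
    ∃ z, ThreeEnds G {z} A := by
  have hconv1 := ray_range_convex hT h1.adj h1.inj
  have hconv2 := ray_range_convex hT h2.adj h2.inj
  have hconv3 := ray_range_convex hT h3.adj h3.inj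
  set w1 := r1 c1 with hw1
  set w2 := r2 c2 with hw2
  set w3 := r3 c3 with hw3
  -- constancy of projections along rays
  have hdisj_sup : ∀ (s t : ℕ → V), (∀ m n, s m ≠ t n) →
      (∀ n, G.Adj (t n) (t (n+1))) → Function.Injective t →
      ∀ (i j : ℕ), ∀ v ∈ sup hT (t i) (t j), v ∉ Set.range s := by
    intro s t hst hadj hinj i j v hv hmem
    obtain ⟨n, rfl⟩ := hmem
    exact hst n (Classical.choose (ray_sup_subset_range hT hadj hinj i j hv))
      (Classical.choose_spec (ray_sup_subset_range hT hadj hinj i j hv)).symm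
  have hp12' : IsProj hT (Set.range r1) w2 w1 :=
    isProj_const hT hconv1 hp12 (hdisj_sup r1 r2 hd12 h2.adj h2.inj c2 0)
  have hp13' : IsProj hT (Set.range r1) w3 w1 :=
    isProj_const hT hconv1 hp13 (hdisj_sup r1 r3 hd13 h3.adj h3.inj c3 0)
  have hp21' : IsProj hT (Set.range r2) w1 w2 :=
    isProj_const hT hconv2 hp21 (hdisj_sup r2 r1 (fun m n h => hd12 n m h.symm) h1.adj h1.inj c1 0)
  have hp23' : IsProj hT (Set.range r2) w3 w2 :=
    isProj_const hT hconv2 hp23 (hdisj_sup r2 r3 hd23 h3.adj h3.inj c3 0)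
  have hp31' : IsProj hT (Set.range r3) w1 w3 :=
    isProj_const hT hconv3 hp31 (hdisj_sup r3 r1 (fun m n h => hd13 n m h.symm) h1.adj h1.inj c1 0)
  have hp32' : IsProj hT (Set.range r3) w2 w3 :=
    isProj_const hT hconv3 hp32 (hdisj_sup r3 r2 (fun m n h => hd23 n m h.symm) h2.adj h2.inj c2 0)
  -- transfers of the same-class hypotheses to the w's
  have hsame1' : Conn G {w1}ᶜ w2 w3 := by
    have e2 : Conn G {w1}ᶜ w2 (r2 0) := by
      apply ray_conn_off hT h2.adj h2.inj
      rintro ⟨n, hn⟩; exact hd12 c1 n hn.symm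
    have e3 : Conn G {w1}ᶜ (r3 0) w3 := by
      apply ray_conn_off hT h3.adj h3.inj
      rintro ⟨n, hn⟩; exact hd13 c1 n hn.symm
    exact (e2.trans hsame1).trans e3
  have hsame2' : Conn G {w2}ᶜ w1 w3 := by
    have e1 : Conn G {w2}ᶜ w1 (r1 0) := by
      apply ray_conn_off hT h1.adj h1.inj
      rintro ⟨n, hn⟩; exact hd12 n c2 hn
    have e3 : Conn G {w2}ᶜ (r3 0) w3 := by
      apply ray_conn_off hT h3.adj h3.inj
      rintro ⟨n, hn⟩; exact hd23 c2 n hn.symm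
    exact (e1.trans hsame2).trans e3
  have hsame3' : Conn G {w3}ᶜ w1 w2 := by
    have e1 : Conn G {w3}ᶜ w1 (r1 0) := by
      apply ray_conn_off hT h1.adj h1.inj
      rintro ⟨n, hn⟩; exact hd13 n c3 hn
    have e2 : Conn G {w3}ᶜ (r2 0) w2 := by
      apply ray_conn_off hT h2.adj h2.inj
      rintro ⟨n, hn⟩; exact hd23 n c3 hn
    exact (e1.trans hsame3).trans e2
  -- the median m of w1 w2 w3
  have hWconv : ∀ p ∈ sup hT w1 w2, ∀ q ∈ sup hT w1 w2, sup hT p q ⊆ sup hT w1 w2 :=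
    fun p hp' q hq' => sup_convex hT hp' hq'
  obtain ⟨m, hm⟩ := proj_exists hT hWconv (left_mem_sup hT w1 w2) w3
  have hmW : m ∈ sup hT w1 w2 := hm.1
  have hm1 : m ∈ sup hT w3 w1 := isProj_mem_sup hT hWconv hm (left_mem_sup hT w1 w2)
  have hm2 : m ∈ sup hT w3 w2 := isProj_mem_sup hT hWconv hm (right_mem_sup hT w1 w2)
  -- m is on none of the rays
  have hmR1 : m ∉ Set.range r1 := by
    intro hmem
    have : m = w1 := by
      apply hp12'.2 m _ hmem
      rw [sup_symm]; exact hmW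
    rw [this] at hm2
    rw [sup_symm] at hm2
    exact not_conn_of_mem hT hm2 hsame1'
  have hmR2 : m ∉ Set.range r2 := by
    intro hmem
    have : m = w2 := hp21'.2 m hmW hmem
    rw [this] at hm1
    rw [sup_symm] at hm1
    exact not_conn_of_mem hT hm1 hsame2'
  have hmR3 : m ∉ Set.range r3 := by
    intro hmem
    have : m = w3 := by
      apply hp31'.2 m _ hmem
      rw [sup_symm]; exact hm1
    rw [this] at hmW
    exact not_conn_of_mem hT hmW hsame3'
  -- m separates the ray basepoints pairwise
  have hm12 : m ∈ sup hT (r1 0) (r2 0) := by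
    have s1 : sup hT w1 w2 ⊆ sup hT w1 (r2 0) := by
      apply sup_convex hT (left_mem_sup hT w1 (r2 0))
      exact isProj_mem_sup hT hconv2 hp21' ⟨0, rfl⟩
    have s2 : sup hT w1 (r2 0) ⊆ sup hT (r1 0) (r2 0) := by
      apply sup_convex hT _ (right_mem_sup hT (r1 0) (r2 0))
      rw [sup_symm]
      exact isProj_mem_sup hT hconv1 hp12 ⟨0, rfl⟩
    exact s2 (s1 hmW)
  have hm13 : m ∈ sup hT (r1 0) (r3 0) := by
    have s1 : sup hT w1 w3 ⊆ sup hT w1 (r3 0) := by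
      apply sup_convex hT (left_mem_sup hT w1 (r3 0))
      exact isProj_mem_sup hT hconv3 hp31' ⟨0, rfl⟩
    have s2 : sup hT w1 (r3 0) ⊆ sup hT (r1 0) (r3 0) := by
      apply sup_convex hT _ (right_mem_sup hT (r1 0) (r3 0))
      rw [sup_symm]
      exact isProj_mem_sup hT hconv1 hp13 ⟨0, rfl⟩
    have : m ∈ sup hT w1 w3 := by rw [sup_symm]; exact hm1
    exact s2 (s1 this)
  have hm23 : m ∈ sup hT (r2 0) (r3 0) := by
    have s1 : sup hT w2 w3 ⊆ sup hT w2 (r3 0) := by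
      apply sup_convex hT (left_mem_sup hT w2 (r3 0))
      exact isProj_mem_sup hT hconv3 hp32' ⟨0, rfl⟩
    have s2 : sup hT w2 (r3 0) ⊆ sup hT (r2 0) (r3 0) := by
      apply sup_convex hT _ (right_mem_sup hT (r2 0) (r3 0))
      rw [sup_symm]
      exact isProj_mem_sup hT hconv2 hp23 ⟨0, rfl⟩
    have : m ∈ sup hT w2 w3 := by rw [sup_symm]; exact hm2
    exact s2 (s1 this)
  -- conclude
  refine ⟨m, final_package m (r1 0) (r2 0) (r3 0)
    (not_conn_of_mem hT hm12) (not_conn_of_mem hT hm13) (not_conn_of_mem hT hm23)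
    ?_ ?_ ?_⟩
  · exact tail_class_infinite h1 ⟨0, fun n _ => ray_conn_off hT h1.adj h1.inj hmR1 0 n⟩
  · exact tail_class_infinite h2 ⟨0, fun n _ => ray_conn_off hT h2.adj h2.inj hmR2 0 n⟩
  · exact tail_class_infinite h3 ⟨0, fun n _ => ray_conn_off hT h3.adj h3.inj hmR3 0 n⟩

include hT in
/-- Three pairwise disjoint rays give a single separating vertex. -/
lemma three_rays_win (h1 : IsRayTo G A r1) (h2 : IsRayTo G A r2) (h3 : IsRayTo G A r3)
    (hd12 : ∀ m n, r1 m ≠ r2 n) (hd13 : ∀ m n, r1 m ≠ r3 n) (hd23 : ∀ m n, r2 m ≠ r3 n) :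
    ∃ z, ThreeEnds G {z} A := by
  have hconv1 := ray_range_convex hT h1.adj h1.inj
  have hconv2 := ray_range_convex hT h2.adj h2.inj
  have hconv3 := ray_range_convex hT h3.adj h3.inj
  have hd21 : ∀ m n, r2 m ≠ r1 n := fun m n h => hd12 n m h.symm
  have hd31 : ∀ m n, r3 m ≠ r1 n := fun m n h => hd13 n m h.symm
  have hd32 : ∀ m n, r3 m ≠ r2 n := fun m n h => hd23 n m h.symm
  obtain ⟨p12, hp12⟩ := proj_exists hT hconv1 ⟨0, rfl⟩ (r2 0)
  obtain ⟨a12, ha⟩ := hp12.1; subst ha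
  obtain ⟨p13, hp13⟩ := proj_exists hT hconv1 ⟨0, rfl⟩ (r3 0)
  obtain ⟨a13, ha⟩ := hp13.1; subst ha
  rcases lt_trichotomy a12 a13 with hlt | heq1 | hgt
  · exact ⟨r1 a13, win_far hT h1 h2 h3 hd12 hd13 hp12 hp13 hlt⟩
  · subst heq1
    by_cases hc1 : Conn G {r1 a12}ᶜ (r2 0) (r3 0)
    · obtain ⟨p21, hp21⟩ := proj_exists hT hconv2 ⟨0, rfl⟩ (r1 0)
      obtain ⟨a21, ha⟩ := hp21.1; subst ha
      obtain ⟨p23, hp23⟩ := proj_exists hT hconv2 ⟨0, rfl⟩ (r3 0)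
      obtain ⟨a23, ha⟩ := hp23.1; subst ha
      rcases lt_trichotomy a21 a23 with hlt' | heq2 | hgt'
      · exact ⟨r2 a23, win_far hT h2 h1 h3 hd21 hd23 hp21 hp23 hlt'⟩
      · subst heq2
        by_cases hc2 : Conn G {r2 a21}ᶜ (r1 0) (r3 0)
        · obtain ⟨p31, hp31⟩ := proj_exists hT hconv3 ⟨0, rfl⟩ (r1 0)
          obtain ⟨a31, ha⟩ := hp31.1; subst ha
          obtain ⟨p32, hp32⟩ := proj_exists hT hconv3 ⟨0, rfl⟩ (r2 0)
          obtain ⟨a32, ha⟩ := hp32.1; subst ha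
          rcases lt_trichotomy a31 a32 with hlt'' | heq3 | hgt''
          · exact ⟨r3 a32, win_far hT h3 h1 h2 hd31 hd32 hp31 hp32 hlt''⟩
          · subst heq3
            by_cases hc3 : Conn G {r3 a31}ᶜ (r1 0) (r2 0)
            · exact win_center hT h1 h2 h3 hd12 hd13 hd23 hp12 hp13 hp21 hp23 hp31 hp32
                hc1 hc2 hc3
            · exact ⟨r3 a31, win_med hT h3 h1 h2 hd31 hd32 hp31 hp32 hc3⟩
          · exact ⟨r3 a31, win_far hT h3 h2 h1 hd32 hd31 hp32 hp31 hgt''⟩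
        · exact ⟨r2 a21, win_med hT h2 h1 h3 hd21 hd23 hp21 hp23 hc2⟩
      · exact ⟨r2 a21, win_far hT h2 h3 h1 hd23 hd21 hp23 hp21 hgt'⟩
    · exact ⟨r1 a12, win_med hT h1 h2 h3 hd12 hd13 hp12 hp13 hc1⟩
  · exact ⟨r1 a12, win_far hT h1 h3 h2 hd13 hd12 hp13 hp12 hgt⟩

include hT in
/-- Extracting a component of `G - S` as a set of vertices. -/
lemma comp_extract {S A : Set V} {Ci : (G.induce Sᶜ).ConnectedComponent}
    (hinf : CompInfinite G S A Ci) :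
    ∃ K : Set V, (A ∩ K).Infinite ∧ (∀ x ∈ K, ∀ y ∈ K, Conn G K x y) ∧ K ⊆ Sᶜ ∧
      (∀ x (hx : x ∈ Sᶜ), ((G.induce Sᶜ).connectedComponentMk ⟨x, hx⟩ = Ci ↔ x ∈ K)) := by
  classical
  set K := (Subtype.val : ↥Sᶜ → V) '' {x : ↥Sᶜ | (G.induce Sᶜ).connectedComponentMk x = Ci}
    with hK
  have hchar : ∀ x (hx : x ∈ Sᶜ), ((G.induce Sᶜ).connectedComponentMk ⟨x, hx⟩ = Ci ↔ x ∈ K) := by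
    intro x hx
    constructor
    · intro h
      exact ⟨⟨x, hx⟩, h, rfl⟩
    · rintro ⟨⟨x', hx'⟩, hmk, rfl⟩
      exact hmk
  have hKS : K ⊆ Sᶜ := by
    rintro x ⟨⟨x', hx'⟩, _, rfl⟩
    exact hx'
  refine ⟨K, ?_, ?_, hKS, hchar⟩
  · have himg : ((Subtype.val : ↥Sᶜ → V) ''
        {x : ↥Sᶜ | (G.induce Sᶜ).connectedComponentMk x = Ci ∧ (x : V) ∈ A}).Infinite := by
      rw [Set.infinite_image_iff (Set.injOn_of_injective Subtype.val_injective)]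
      exact hinf
    apply himg.mono
    rintro x ⟨⟨x', hx'⟩, ⟨hmk, hA⟩, rfl⟩
    exact ⟨hA, ⟨⟨x', hx'⟩, hmk, rfl⟩⟩
  · rintro x ⟨⟨x, hxS⟩, hmkx, rfl⟩ y ⟨⟨y, hyS⟩, hmky, rfl⟩
    have hreach : (G.induce Sᶜ).Reachable ⟨x, hxS⟩ ⟨y, hyS⟩ :=
      SimpleGraph.ConnectedComponent.eq.1 (hmkx.trans hmky.symm)
    have hconn : Conn G Sᶜ x y := (reachable_induce_iff _ _).1 hreach
    have hsup : sup hT x y ⊆ K := by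
      intro t ht
      have hct : Conn G Sᶜ x t := conn_of_mem_sup hT hconn ht
      have htS : t ∈ Sᶜ := hct.mem_right
      have : (G.induce Sᶜ).connectedComponentMk ⟨t, htS⟩ = Ci := by
        rw [← hmkx]
        exact (SimpleGraph.ConnectedComponent.eq.2 ((reachable_induce_iff _ _).2 hct)).symm
      exact ⟨⟨t, htS⟩, this, rfl⟩
    exact ⟨pth hT x y, fun v hv => hsup hv⟩

end Endgame

end TreeAux

open TreeAux in
/-- If there is a finite set `S` of vertices of a locally finite tree `T` whose deletion leaves
at least three connected components each containing infinitely many elements of `A`, then there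
is a single vertex `v` whose deletion leaves at least three connected components each containing
infinitely many elements of `A`. -/
theorem three_ends_from_single_vertex (G : SimpleGraph V) (hT : G.IsTree)
    (hlf : G.LocallyFinite) (A : Set V) (S : Set V) (hS : S.Finite)
    (h3 : ThreeEnds G S A) :
    ∃ v : V, ThreeEnds G {v} A := by
  obtain ⟨C₁, C₂, C₃, hne12, hne13, hne23, hi1, hi2, hi3⟩ := h3
  obtain ⟨K1, hK1inf, hK1conn, hK1S, hK1char⟩ := comp_extract hT hi1
  obtain ⟨K2, hK2inf, hK2conn, hK2S, hK2char⟩ := comp_extract hT hi2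
  obtain ⟨K3, hK3inf, hK3conn, hK3S, hK3char⟩ := comp_extract hT hi3
  have hdisj : ∀ (K K' : Set V) (C C' : (G.induce Sᶜ).ConnectedComponent), C ≠ C' →
      (∀ x (hx : x ∈ Sᶜ), ((G.induce Sᶜ).connectedComponentMk ⟨x, hx⟩ = C ↔ x ∈ K)) →
      (∀ x (hx : x ∈ Sᶜ), ((G.induce Sᶜ).connectedComponentMk ⟨x, hx⟩ = C' ↔ x ∈ K')) →
      K ⊆ Sᶜ → ∀ x ∈ K, x ∉ K' := by
    intro K K' C C' hCC hcK hcK' hKS x hxK hxK'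
    have hxS : x ∈ Sᶜ := hKS hxK
    exact hCC (((hcK x hxS).2 hxK).symm.trans ((hcK' x hxS).2 hxK'))
  obtain ⟨r1, hr1, hr1K⟩ := exists_ray hT hlf hK1conn hK1inf
  obtain ⟨r2, hr2, hr2K⟩ := exists_ray hT hlf hK2conn hK2inf
  obtain ⟨r3, hr3, hr3K⟩ := exists_ray hT hlf hK3conn hK3inf
  exact three_rays_win hT hr1 hr2 hr3
    (fun m n h => hdisj K1 K2 C₁ C₂ hne12 hK1char hK2char hK1S (r1 m) (hr1K m) (h ▸ hr2K n))
    (fun m n h => hdisj K1 K3 C₁ C₃ hne13 hK1char hK3char hK1S (r1 m) (hr1K m) (h ▸ hr3K n))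
    (fun m n h => hdisj K2 K3 C₂ C₃ hne23 hK2char hK3char hK2S (r2 m) (hr2K m) (h ▸ hr3K n))
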